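/- Let G be a finite simple graph of order n with maximum degree Δ and degree sequence d₁ ≤ d₂ ≤ ⋯ ≤ d_n, and let 1 ≤ k ≤ n be a positive integer. Then γ^NN_{ks}(G) ≥ (2 ∑_{i=1}^{k} ⌈(d_i + 1)/2⌉)/(Δ + 1) − n. -/

import Mathlib

open Finset

/-- The closed neighborhood of `v` in `G`, as a `Finset`. -/
def closedNbr {V : Type*} [Fintype V] [DecidableEq V] (G : SimpleGraph V) [DecidableRel G.Adj]
    (v : V) : Finset V := insert v (G.neighborFinset v)

/-- `f` is a nonnegative signed `k`-subdominating function of `G`: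
`f : V → {-1, 1}` and `∑_{u ∈ N[v]} f(u) ≥ 0` for at least `k` vertices `v`. -/
def IsNNSkSDF {V : Type*} [Fintype V] [DecidableEq V] (G : SimpleGraph V) [DecidableRel G.Adj]
    (k : ℕ) (f : V → ℤ) : Prop :=
  (∀ v, f v = 1 ∨ f v = -1) ∧
    k ≤ (univ.filter fun v => 0 ≤ ∑ u ∈ closedNbr G v, f u).card

/-- The nonnegative signed `k`-subdomination number `γ^NN_{ks}(G)`. -/
noncomputable def gammaNNks {V : Type*} [Fintype V] [DecidableEq V] (G : SimpleGraph V)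
    [DecidableRel G.Adj] (k : ℕ) : ℤ :=
  sInf {w : ℤ | ∃ f : V → ℤ, IsNNSkSDF G k f ∧ w = ∑ v, f v}

/-- Sum of the first `k` values of a monotone-on-`[0,n)` function is at most the sum of any
`k`-element sub-multiset of its range of values. -/
lemma aux_sorted_sum_le (c : ℕ → ℤ) (n k : ℕ) (hc : ∀ i j, i ≤ j → j < n → c i ≤ c j)
    (s : Multiset ℤ) (hs : s ≤ (Multiset.range n).map c) (hcard : Multiset.card s = k) :
    ∑ i ∈ Finset.range k, c i ≤ s.sum := by
  classical
  set l := s.sort (· ≤ ·) with hl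
  have hls : (l : Multiset ℤ) = s := Multiset.sort_eq _ _
  have hlen : l.length = k := by rw [← Multiset.coe_card, hls, hcard]
  set L := (List.range n).map c with hLdef
  have hLco : (Multiset.range n).map c = (L : Multiset ℤ) := by
    simp [hLdef, Multiset.range]
  have hLlen : L.length = n := by simp [hLdef]
  have hsub : List.Subperm l L := by
    rw [← Multiset.coe_le]
    rw [hls, ← hLco]; exact hs
  have hLget : ∀ i : Fin L.length, L.get i = c i := by
    intro i
    simp [hLdef, List.getElem_map]
  have hLsorted : L.Pairwise (· ≤ ·) := by
    rw [List.pairwise_iff_get]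
    intro i j hij
    rw [hLget, hLget]
    exact hc i j (le_of_lt hij) (by omega)
  have hlsorted : l.Pairwise (· ≤ ·) := Multiset.pairwise_sort _ _
  have hsl : List.Sublist l L := List.sublist_of_subperm_of_pairwise hsub hlsorted hLsorted
  obtain ⟨g, hg⟩ := List.sublist_iff_exists_orderEmbedding_getElem?_eq.mp hsl
  have key : ∀ i : Fin l.length, c i ≤ l.get i := by
    intro i
    have h1 : l[(i : ℕ)]? = some (l.get i) := by simp
    rw [hg i] at h1
    obtain ⟨hlt, hval⟩ := List.getElem?_eq_some_iff.mp h1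
    have hle : (i : ℕ) ≤ g i := g.strictMono.le_apply
    calc c i ≤ c (g i) := hc _ _ hle (by omega)
      _ = L.get ⟨(g i : ℕ), hlt⟩ := (hLget ⟨(g i : ℕ), hlt⟩).symm
      _ = l.get i := hval
  have hsum : l.sum = ∑ i : Fin l.length, l.get i := by
    conv_lhs => rw [← List.ofFn_get l]
    rw [List.sum_ofFn]
  have : ∑ i ∈ Finset.range l.length, c i ≤ l.sum := by
    rw [hsum, Finset.sum_range fun i => c i]
    exact Finset.sum_le_sum fun i _ => key i
  calc ∑ i ∈ Finset.range k, c i = ∑ i ∈ Finset.range l.length, c i := by rw [hlen]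
    _ ≤ l.sum := this
    _ = s.sum := by rw [← hls]; exact Multiset.sum_coe l

theorem gammaNNks_lower_bound_1 {V : Type*} [Fintype V] [DecidableEq V]
    (G : SimpleGraph V) [DecidableRel G.Adj]
    (n k Δ : ℕ) (hn : n = Fintype.card V) (hΔ : Δ = G.maxDegree)
    (hk1 : 1 ≤ k) (hk2 : k ≤ n)
    (d : ℕ → ℕ) (hmono : ∀ i j, i ≤ j → j < n → d i ≤ d j)
    (hseq : (univ : Finset V).val.map (fun v => G.degree v) = (Finset.range n).val.map d) :
    (2 * ∑ i ∈ Finset.range k, (⌈((d i : ℚ) + 1) / 2⌉ : ℝ)) / ((Δ : ℝ) + 1) - n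
      ≤ (gammaNNks G k : ℝ) := by
  classical
  set S : Set ℤ := {w : ℤ | ∃ f : V → ℤ, IsNNSkSDF G k f ∧ w = ∑ v, f v} with hS
  -- basic facts about closed neighborhoods
  have hNcard : ∀ v : V, (closedNbr G v).card = G.degree v + 1 := by
    intro v
    rw [closedNbr, Finset.card_insert_of_notMem (by simp), SimpleGraph.card_neighborFinset_eq_degree]
  have hNmem : ∀ u v : V, u ∈ closedNbr G v ↔ v ∈ closedNbr G u := by
    intro u v
    simp only [closedNbr, Finset.mem_insert, SimpleGraph.mem_neighborFinset]
    constructor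
    · rintro (rfl | h); · exact Or.inl rfl
      · exact Or.inr h.symm
    · rintro (rfl | h); · exact Or.inl rfl
      · exact Or.inr h.symm
  -- nonemptiness of S
  have hne : S.Nonempty := by
    refine ⟨Fintype.card V, fun _ => 1, ⟨fun v => Or.inl rfl, ?_⟩, by simp⟩
    have : (univ.filter fun v : V => 0 ≤ ∑ u ∈ closedNbr G v, (1 : ℤ)).card = Fintype.card V := by
      rw [Finset.filter_true_of_mem, Finset.card_univ]
      intro v _
      simp
    rw [this]; omega
  -- bounded below
  have hbdd : BddBelow S := by
    refine ⟨-(Fintype.card V : ℤ), ?_⟩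
    rintro w ⟨f, ⟨hf1, _⟩, rfl⟩
    have : ∀ v : V, (-1 : ℤ) ≤ f v := fun v => by rcases hf1 v with h | h <;> omega
    calc (-(Fintype.card V : ℤ)) = ∑ _v : V, (-1 : ℤ) := by simp
      _ ≤ ∑ v, f v := Finset.sum_le_sum fun v _ => this v
  -- the key inequality for any NNSkSDF
  have main : ∀ f : V → ℤ, IsNNSkSDF G k f →
      2 * (∑ i ∈ Finset.range k, (⌈((d i : ℚ) + 1) / 2⌉ : ℤ)) ≤
        (∑ v, f v + (n : ℤ)) * ((Δ : ℤ) + 1) := by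
    intro f hf
    obtain ⟨hf1, hf2⟩ := hf
    set P : Finset V := univ.filter (fun v => f v = 1) with hP
    set p := P.card with hp
    set q := (univ.filter (fun v => ¬ f v = 1)).card with hq
    have hpq : p + q = Fintype.card V := by
      rw [hp, hq, Finset.card_filter_add_card_filter_not, Finset.card_univ]
    have hw : ∑ v, f v = (p : ℤ) - q := by
      rw [← Finset.sum_filter_add_sum_filter_not univ (fun v => f v = 1) f]
      have h1 : ∑ v ∈ univ.filter (fun v => f v = 1), f v = (p : ℤ) := by
        rw [Finset.sum_congr rfl (fun v hv => (Finset.mem_filter.mp hv).2)]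
        simp [hp, hP]
      have h2 : ∑ v ∈ univ.filter (fun v => ¬ f v = 1), f v = -(q : ℤ) := by
        have hneg : ∀ v ∈ univ.filter (fun v => ¬ f v = 1), f v = -1 := by
          intro v hv
          rcases hf1 v with h | h
          · exact absurd h (Finset.mem_filter.mp hv).2
          · exact h
        rw [Finset.sum_congr rfl hneg, Finset.sum_const, hq]
        simp
      rw [h1, h2]; ring
    -- pointwise bound on good vertices
    have hpoint : ∀ v : V, 0 ≤ ∑ u ∈ closedNbr G v, f u →
        (⌈((G.degree v : ℚ) + 1) / 2⌉ : ℤ) ≤ ((closedNbr G v ∩ P).card : ℤ) := by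
      intro v hv
      set N := closedNbr G v with hN
      have hNP : N ∩ P = N.filter (fun u => f u = 1) := by
        ext u; simp [hP, and_comm]
      set a := (N.filter (fun u => f u = 1)).card with ha
      set b := (N.filter (fun u => ¬ f u = 1)).card with hb
      have hab : a + b = G.degree v + 1 := by
        rw [ha, hb, Finset.card_filter_add_card_filter_not, hNcard]
      have hsum : ∑ u ∈ N, f u = (a : ℤ) - b := by
        rw [← Finset.sum_filter_add_sum_filter_not N (fun u => f u = 1) f]
        have h1 : ∑ u ∈ N.filter (fun u => f u = 1), f u = (a : ℤ) := by
          rw [Finset.sum_congr rfl (fun u hu => (Finset.mem_filter.mp hu).2)]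
          simp [ha]
        have h2 : ∑ u ∈ N.filter (fun u => ¬ f u = 1), f u = -(b : ℤ) := by
          have hneg : ∀ u ∈ N.filter (fun u => ¬ f u = 1), f u = -1 := by
            intro u hu
            rcases hf1 u with h | h
            · exact absurd h (Finset.mem_filter.mp hu).2
            · exact h
          rw [Finset.sum_congr rfl hneg, Finset.sum_const, hb]
          simp
        rw [h1, h2]; ring
      have h2a : (G.degree v : ℤ) + 1 ≤ 2 * a := by
        rw [hsum] at hv; omega
      rw [hNP]
      rw [Int.ceil_le]
      push_cast
      rw [div_le_iff₀ (by norm_num : (0:ℚ) < 2)]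
      exact_mod_cast by linarith [h2a]
    -- choose a k-subset of good vertices
    set A : Finset V := univ.filter (fun v => 0 ≤ ∑ u ∈ closedNbr G v, f u) with hA
    obtain ⟨B, hBA, hBcard⟩ := Finset.exists_subset_card_eq hf2
    -- step 1: sorted degree sum
    have step1 : ∑ i ∈ Finset.range k, (⌈((d i : ℚ) + 1) / 2⌉ : ℤ) ≤
        ∑ v ∈ B, (⌈((G.degree v : ℚ) + 1) / 2⌉ : ℤ) := by
      set c : ℕ → ℤ := fun m => (⌈((d m : ℚ) + 1) / 2⌉ : ℤ) with hcdef
      have hc : ∀ i j, i ≤ j → j < n → c i ≤ c j := by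
        intro i j hij hj
        apply Int.ceil_le_ceil
        have := hmono i j hij hj
        have : (d i : ℚ) ≤ d j := by exact_mod_cast this
        linarith
      have hmle : (B.val.map (fun v => G.degree v)) ≤ (Multiset.range n).map d := by
        have h1 : B.val ≤ (univ : Finset V).val := Finset.val_le_iff.mpr (fun x hx => Finset.mem_univ x)
        calc B.val.map (fun v => G.degree v) ≤ (univ : Finset V).val.map (fun v => G.degree v) :=
              Multiset.map_le_map h1
          _ = (Multiset.range n).map d := by rw [hseq]; rfl
      have hmle2 : (B.val.map (fun v => G.degree v)).map (fun m : ℕ => (⌈((m : ℚ) + 1) / 2⌉ : ℤ)) ≤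
          (Multiset.range n).map c := by
        have h0 := Multiset.map_le_map (f := fun m : ℕ => (⌈((m : ℚ) + 1) / 2⌉ : ℤ)) hmle
        simp only [Multiset.map_map] at h0 ⊢
        exact h0
      have hcard' : Multiset.card ((B.val.map (fun v => G.degree v)).map
          (fun m : ℕ => (⌈((m : ℚ) + 1) / 2⌉ : ℤ))) = k := by
        simp [hBcard]
      have h := aux_sorted_sum_le c n k hc _ hmle2 hcard'
      rw [Multiset.map_map] at h
      exact h
    -- step 2: pointwise bound on B
    have step2 : ∑ v ∈ B, (⌈((G.degree v : ℚ) + 1) / 2⌉ : ℤ) ≤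
        ∑ v ∈ B, ((closedNbr G v ∩ P).card : ℤ) := by
      apply Finset.sum_le_sum
      intro v hv
      exact hpoint v (Finset.mem_filter.mp (hBA hv)).2
    -- step 3: extend to univ
    have step3 : ∑ v ∈ B, ((closedNbr G v ∩ P).card : ℤ) ≤
        ∑ v : V, ((closedNbr G v ∩ P).card : ℤ) :=
      Finset.sum_le_sum_of_subset_of_nonneg (Finset.subset_univ B)
        (fun v _ _ => by positivity)
    -- step 4: double counting
    have step4 : ∑ v : V, ((closedNbr G v ∩ P).card : ℤ) = ∑ u ∈ P, ((G.degree u : ℤ) + 1) := by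
      have h1 : ∀ v : V, ((closedNbr G v ∩ P).card : ℤ) =
          ∑ u ∈ P, (if u ∈ closedNbr G v then (1 : ℤ) else 0) := by
        intro v
        rw [Finset.sum_ite_mem, Finset.sum_const, Finset.inter_comm]
        simp
      simp_rw [h1]
      rw [Finset.sum_comm]
      apply Finset.sum_congr rfl
      intro u _
      have h2 : ∀ v : V, (if u ∈ closedNbr G v then (1:ℤ) else 0)
          = (if v ∈ closedNbr G u then (1:ℤ) else 0) := fun v => by simp only [hNmem u v]
      simp_rw [h2]
      rw [Finset.sum_ite_mem, Finset.univ_inter, Finset.sum_const, hNcard u]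
      push_cast
      ring
    -- step 5: max degree bound
    have step5 : ∑ u ∈ P, ((G.degree u : ℤ) + 1) ≤ (p : ℤ) * ((Δ : ℤ) + 1) := by
      calc ∑ u ∈ P, ((G.degree u : ℤ) + 1) ≤ ∑ _u ∈ P, ((Δ : ℤ) + 1) := by
            apply Finset.sum_le_sum
            intro u _
            have := G.degree_le_maxDegree u
            rw [hΔ]; exact_mod_cast by omega
        _ = (p : ℤ) * ((Δ : ℤ) + 1) := by rw [Finset.sum_const, nsmul_eq_mul, hp]
    have hfinal : ∑ i ∈ Finset.range k, (⌈((d i : ℚ) + 1) / 2⌉ : ℤ) ≤ (p : ℤ) * ((Δ : ℤ) + 1) :=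
      le_trans step1 (le_trans step2 (le_trans step3 (le_trans (le_of_eq step4) step5)))
    have h2p : ∑ v, f v + (n : ℤ) = 2 * p := by
      rw [hw, hn]; push_cast [← hpq]; ring
    rw [h2p]
    calc 2 * (∑ i ∈ Finset.range k, (⌈((d i : ℚ) + 1) / 2⌉ : ℤ)) ≤ 2 * ((p : ℤ) * ((Δ : ℤ) + 1)) := by
          linarith [hfinal]
      _ = 2 * (p : ℤ) * ((Δ : ℤ) + 1) := by ring
  -- conclude
  have hmem : gammaNNks G k ∈ S := Int.csInf_mem hne hbdd
  obtain ⟨f, hf, heq⟩ := hmem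
  have h := main f hf
  rw [← heq] at h
  have hcast : (∑ i ∈ Finset.range k, (⌈((d i : ℚ) + 1) / 2⌉ : ℝ)) =
      ((∑ i ∈ Finset.range k, (⌈((d i : ℚ) + 1) / 2⌉ : ℤ) : ℤ) : ℝ) := by
    push_cast; rfl
  rw [hcast, sub_le_iff_le_add, div_le_iff₀ (by positivity)]
  have := (by exact_mod_cast h : (2 : ℝ) * ((∑ i ∈ Finset.range k, (⌈((d i : ℚ) + 1) / 2⌉ : ℤ) : ℤ) : ℝ) ≤
      ((gammaNNks G k : ℝ) + n) * ((Δ : ℝ) + 1))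
  linarith
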